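/- For all integers q ≥ 1, p coprime to q, and every natural number n ≥ 1, the partial sum ∑_{k=1}^{n} sgn(sin(kπp/q))·cos(kπp/q) is bounded below by -q/2. -/

import Mathlib

open Real Finset

namespace Stmt3Aux

noncomputable def f (p : ℤ) (q : ℕ) (k : ℕ) : ℝ :=
  Real.sign (Real.sin (k * Real.pi * p / q)) * Real.cos (k * Real.pi * p / q)

lemma abs_f_le (p : ℤ) (q k : ℕ) : |f p q k| ≤ 1 := by
  rw [f, abs_mul]
  have h1 : |Real.sign (Real.sin (k * Real.pi * p / q))| ≤ 1 := by
    rcases Real.sign_apply_eq (Real.sin (k * Real.pi * p / q)) with h | h | h <;>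
      rw [h] <;> norm_num
  have h2 := Real.abs_cos_le_one (k * Real.pi * p / q)
  calc |Real.sign (Real.sin (k * Real.pi * p / q))| * |Real.cos (k * Real.pi * p / q)|
      ≤ 1 * 1 := by
        apply mul_le_mul h1 h2 (abs_nonneg _) zero_le_one
    _ = 1 := by ring

lemma theta_add (p : ℤ) {q : ℕ} (hq : 1 ≤ q) (k : ℕ) :
    ((k + q : ℕ) : ℝ) * Real.pi * p / q = k * Real.pi * p / q + p * Real.pi := by
  have hq0 : (q : ℝ) ≠ 0 := by positivity
  push_cast
  field_simp

lemma f_periodic (p : ℤ) {q : ℕ} (hq : 1 ≤ q) (k : ℕ) : f p q (k + q) = f p q k := by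
  rw [f, f, theta_add p hq, Real.sin_add_int_mul_pi, Real.cos_add_int_mul_pi]
  rcases Int.even_or_odd p with he | ho
  · rw [he.neg_one_zpow]; ring_nf
  · rw [ho.neg_one_zpow]
    rw [neg_one_mul, neg_one_mul, Real.sign_neg]
    ring

lemma f_zero (p : ℤ) (q : ℕ) : f p q 0 = 0 := by
  simp [f]

lemma f_reflect (p : ℤ) {q : ℕ} (hq : 1 ≤ q) {k : ℕ} (hk : k ≤ q) :
    f p q (q - k) = - f p q k := by
  have hq0 : (q : ℝ) ≠ 0 := by positivity
  have hθ : ((q - k : ℕ) : ℝ) * Real.pi * p / q = p * Real.pi - k * Real.pi * p / q := by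
    have : ((q - k : ℕ) : ℝ) = (q : ℝ) - k := by
      push_cast [hk]; ring
    rw [this]; field_simp
  rw [f, f, hθ]
  have hs : Real.sin ((p : ℝ) * Real.pi - k * Real.pi * p / q)
      = - ((-1 : ℝ) ^ p * Real.sin (k * Real.pi * p / q)) := by
    have := Real.sin_add_int_mul_pi (-(k * Real.pi * p / q)) p
    rw [Real.sin_neg] at this
    have h2 : (p : ℝ) * Real.pi - k * Real.pi * p / q = -(k * Real.pi * p / q) + p * Real.pi := by ring
    rw [h2, this]; ring
  have hc : Real.cos ((p : ℝ) * Real.pi - k * Real.pi * p / q)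
      = (-1 : ℝ) ^ p * Real.cos (k * Real.pi * p / q) := by
    have := Real.cos_add_int_mul_pi (-(k * Real.pi * p / q)) p
    rw [Real.cos_neg] at this
    have h2 : (p : ℝ) * Real.pi - k * Real.pi * p / q = -(k * Real.pi * p / q) + p * Real.pi := by ring
    rw [h2, this]
  rw [hs, hc]
  rcases Int.even_or_odd p with he | ho
  · rw [he.neg_one_zpow]
    rw [one_mul, one_mul, Real.sign_neg]; ring
  · rw [ho.neg_one_zpow]
    have : -(-1 * Real.sin (k * Real.pi * p / q)) = Real.sin (k * Real.pi * p / q) := by ring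
    rw [this]; ring

lemma sum_period_zero (p : ℤ) {q : ℕ} (hq : 1 ≤ q) :
    ∑ k ∈ Finset.range (q + 1), f p q k = 0 := by
  have h := Finset.sum_range_reflect (f p q) (q + 1)
  have h2 : ∀ j ∈ Finset.range (q + 1), f p q (q + 1 - 1 - j) = - f p q j := by
    intro j hj
    rw [Finset.mem_range] at hj
    have : q + 1 - 1 - j = q - j := by omega
    rw [this, f_reflect p hq (by omega)]
  rw [Finset.sum_congr rfl h2, Finset.sum_neg_distrib] at h
  linarith [h]

lemma window_zero (p : ℤ) {q : ℕ} (hq : 1 ≤ q) (m : ℕ) :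
    ∑ k ∈ Finset.range q, f p q (k + 1 + m) = 0 := by
  induction m with
  | zero =>
    have h0 := sum_period_zero p hq
    rw [Finset.sum_range_succ'] at h0
    rw [f_zero] at h0
    simpa using h0
  | succ m ih =>
    have key : ∑ k ∈ Finset.range (q + 1), f p q (k + 1 + m)
        = ∑ k ∈ Finset.range q, f p q (k + 1 + m) + f p q (q + 1 + m) := by
      rw [Finset.sum_range_succ]
    have key2 : ∑ k ∈ Finset.range (q + 1), f p q (k + 1 + m)
        = ∑ k ∈ Finset.range q, f p q (k + 1 + 1 + m) + f p q (0 + 1 + m) := by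
      rw [Finset.sum_range_succ' (fun k => f p q (k + 1 + m)) q]
    have hper : f p q (q + 1 + m) = f p q (0 + 1 + m) := by
      have := f_periodic p hq (1 + m)
      simpa [Nat.add_comm, Nat.add_assoc, Nat.add_left_comm] using this
    have : ∑ k ∈ Finset.range q, f p q (k + 1 + 1 + m) = ∑ k ∈ Finset.range q, f p q (k + 1 + m) := by
      have := key.symm.trans key2
      rw [hper] at this
      linarith
    calc ∑ k ∈ Finset.range q, f p q (k + 1 + (m + 1))
        = ∑ k ∈ Finset.range q, f p q (k + 1 + 1 + m) := by
          apply Finset.sum_congr rfl; intro k _; congr 1; omega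
      _ = 0 := by rw [this]; exact ih

lemma sum_Ioc_eq_range (g : ℕ → ℝ) (m n : ℕ) :
    ∑ k ∈ Finset.Ioc m n, g k = ∑ k ∈ Finset.range (n - m), g (m + 1 + k) := by
  rw [← Finset.Icc_add_one_left_eq_Ioc, ← Finset.Ico_add_one_right_eq_Icc, Finset.sum_Ico_eq_sum_range]
  apply Finset.sum_congr (by congr 1; omega) (fun k _ => rfl)

lemma S_lower (p : ℤ) {q : ℕ} (hq : 1 ≤ q) (n : ℕ) :
    -((q : ℝ) / 2) ≤ ∑ k ∈ Finset.Ioc 0 n, f p q k := by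
  induction n using Nat.strong_induction_on with
  | _ n ih =>
  by_cases hle : n ≤ q
  · -- direct bounds
    by_cases h2 : 2 * n ≤ q
    · have hb : ∀ k ∈ Finset.Ioc 0 n, -1 ≤ f p q k := fun k _ =>
        neg_le_of_abs_le (abs_f_le p q k)
      have := Finset.sum_le_sum hb
      have hcard : (Finset.Ioc 0 n).card = n := by simp
      have : -(n : ℝ) ≤ ∑ k ∈ Finset.Ioc 0 n, f p q k := by
        calc -(n : ℝ) = ∑ _k ∈ Finset.Ioc 0 n, (-1 : ℝ) := by
              rw [Finset.sum_const, hcard]; ring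
          _ ≤ _ := Finset.sum_le_sum hb
      have hn2 : (n : ℝ) ≤ (q : ℝ) / 2 := by
        rw [le_div_iff₀ (by norm_num)]
        exact_mod_cast (by omega : n * 2 ≤ q)
      linarith
    · -- n > q/2 : use total sum zero
      have htot : ∑ k ∈ Finset.Ioc 0 q, f p q k = 0 := by
        have h0 := sum_period_zero p hq
        rw [Finset.sum_range_succ'] at h0
        rw [f_zero] at h0
        have : ∑ k ∈ Finset.Ioc 0 q, f p q k = ∑ k ∈ Finset.range q, f p q (k + 1) := by
          rw [sum_Ioc_eq_range]
          apply Finset.sum_congr (by congr 1)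
          intro k _; congr 1; omega
        rw [this]; linarith
      have hsplit : ∑ k ∈ Finset.Ioc 0 n, f p q k + ∑ k ∈ Finset.Ioc n q, f p q k
          = ∑ k ∈ Finset.Ioc 0 q, f p q k :=
        Finset.sum_Ioc_consecutive _ (Nat.zero_le n) hle
      have hb : ∀ k ∈ Finset.Ioc n q, f p q k ≤ 1 := fun k _ =>
        le_of_abs_le (abs_f_le p q k)
      have hcard : (Finset.Ioc n q).card = q - n := by simp
      have hup : ∑ k ∈ Finset.Ioc n q, f p q k ≤ (q - n : ℕ) := by
        calc ∑ k ∈ Finset.Ioc n q, f p q k ≤ ∑ _k ∈ Finset.Ioc n q, (1 : ℝ) :=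
              Finset.sum_le_sum hb
          _ = (q - n : ℕ) := by rw [Finset.sum_const, hcard]; simp
      have hqn : ((q - n : ℕ) : ℝ) ≤ (q : ℝ) / 2 := by
        rw [le_div_iff₀ (by norm_num)]
        exact_mod_cast (by omega : (q - n) * 2 ≤ q)
      linarith
  · -- n > q : peel off a full period at the end
    push_neg at hle
    set m := n - q with hm
    have hn : n = m + q := by omega
    have hwin : ∑ k ∈ Finset.Ioc m n, f p q k = 0 := by
      have : ∑ k ∈ Finset.Ioc m n, f p q k = ∑ k ∈ Finset.range q, f p q (k + 1 + m) := by
        rw [sum_Ioc_eq_range]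
        apply Finset.sum_congr (by congr 1; omega)
        intro k _; congr 1; omega
      rw [this]; exact window_zero p hq m
    have hsplit : ∑ k ∈ Finset.Ioc 0 m, f p q k + ∑ k ∈ Finset.Ioc m n, f p q k
        = ∑ k ∈ Finset.Ioc 0 n, f p q k :=
      Finset.sum_Ioc_consecutive _ (Nat.zero_le m) (by omega)
    have hm2 : m < n := by omega
    have := ih m hm2
    linarith

end Stmt3Aux

theorem stmt_3 (p : ℤ) (q : ℕ) (hq : 1 ≤ q) (hpq : Int.gcd p q = 1)
    (n : ℕ) (hn : 1 ≤ n) :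
    -((q : ℝ) / 2) ≤ ∑ k ∈ Finset.Icc 1 n,
      Real.sign (Real.sin (k * Real.pi * p / q)) * Real.cos (k * Real.pi * p / q) := by
  have := Stmt3Aux.S_lower p hq n
  rw [← Finset.Icc_add_one_left_eq_Ioc] at this
  simpa [Stmt3Aux.f] using this
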